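/- Let Λ be a lattice in ℝ^d with bounded fundamental region I_Λ containing 0, let Γ₂ ⊂ Γ₁ be open cones with closure of Γ₂ contained in Γ₁ ∪ {0}. Then there exists r > 0 such that every ξ ∈ Γ₂ with |ξ| ≥ r can be written as ξ = μ + t with μ ∈ Γ₁ ∩ Λ and t ∈ I_Λ. -/
import Mathlib


/-- For a lattice `Λ` with bounded fundamental region `I_Λ ∋ 0` and open cones
`Γ₂ ⊆ Γ₁` with `closure Γ₂ ⊆ Γ₁ ∪ {0}`, there is `r > 0` such that every
`ξ ∈ Γ₂` with `|ξ| ≥ r` can be written as `ξ = μ + t` with `μ ∈ Γ₁ ∩ Λ` and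
`t ∈ I_Λ`. -/
theorem cone_lattice_decomposition {d : ℕ}
    (Λ : AddSubgroup (EuclideanSpace ℝ (Fin d)))
    (hdisc : ∃ r : ℝ, 0 < r ∧ ∀ μ ∈ Λ, μ ≠ 0 → r ≤ ‖μ‖)
    (I : Set (EuclideanSpace ℝ (Fin d)))
    (hIbdd : Bornology.IsBounded I) (hI0 : (0 : EuclideanSpace ℝ (Fin d)) ∈ I)
    (hIfund : ∀ x : EuclideanSpace ℝ (Fin d), ∃! μ : Λ, x - (μ : EuclideanSpace ℝ (Fin d)) ∈ I)
    (Γ₁ Γ₂ : Set (EuclideanSpace ℝ (Fin d)))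
    (hΓ₁open : IsOpen Γ₁) (hΓ₂open : IsOpen Γ₂)
    (hΓ₁cone : ∀ (t : ℝ), 0 < t → ∀ x ∈ Γ₁, t • x ∈ Γ₁)
    (hΓ₂cone : ∀ (t : ℝ), 0 < t → ∀ x ∈ Γ₂, t • x ∈ Γ₂)
    (hcl : closure Γ₂ ⊆ Γ₁ ∪ {0}) :
    ∃ r : ℝ, 0 < r ∧ ∀ ξ ∈ Γ₂, r ≤ ‖ξ‖ →
      ∃ μ ∈ Λ, μ ∈ Γ₁ ∧ ∃ t ∈ I, ξ = μ + t := by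

  obtain ⟨C, hC⟩ := hIbdd.subset_closedBall 0
  have hC0 : 0 ≤ C := by simpa using hC hI0
  set K := closure Γ₂ ∩ Metric.sphere (0 : EuclideanSpace ℝ (Fin d)) 1 with hK
  have hKcomp : IsCompact K := (isCompact_sphere 0 1).inter_left isClosed_closure
  have hKsub : K ⊆ Γ₁ := by
    rintro x ⟨hx, hxs⟩
    rcases hcl hx with h | h
    · exact h
    · exfalso
      simp only [Set.mem_singleton_iff] at h
      subst h
      simp at hxs
  obtain ⟨δ, hδ, hth⟩ := hKcomp.exists_thickening_subset_open hΓ₁open hKsub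
  refine ⟨(C + 1) / δ, by positivity, ?_⟩
  intro ξ hξ hr
  have hξ0 : ξ ≠ 0 := by
    intro h
    rw [h, norm_zero] at hr
    have : (0:ℝ) < (C + 1) / δ := by positivity
    linarith
  have hnorm : 0 < ‖ξ‖ := norm_pos_iff.mpr hξ0
  obtain ⟨μ, hμI, _⟩ := hIfund ξ
  refine ⟨μ, μ.2, ?_, ξ - μ, hμI, by abel⟩
  have hx : (‖ξ‖⁻¹ • ξ) ∈ K := by
    refine ⟨subset_closure (hΓ₂cone _ (inv_pos.mpr hnorm) ξ hξ), ?_⟩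
    simp [norm_smul, abs_of_nonneg (le_of_lt (inv_pos.mpr hnorm)), inv_mul_cancel₀ hnorm.ne']
  have hy : (‖ξ‖⁻¹ • (μ : EuclideanSpace ℝ (Fin d))) ∈ Metric.thickening δ K := by
    rw [Metric.mem_thickening_iff]
    refine ⟨‖ξ‖⁻¹ • ξ, hx, ?_⟩
    have hdist : dist (‖ξ‖⁻¹ • (μ : EuclideanSpace ℝ (Fin d))) (‖ξ‖⁻¹ • ξ) = ‖ξ‖⁻¹ * ‖ξ - μ‖ := by
      rw [dist_eq_norm, ← smul_sub, norm_smul, Real.norm_eq_abs,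
        abs_of_nonneg (le_of_lt (inv_pos.mpr hnorm)), norm_sub_rev]
    rw [hdist]
    have ht : ‖ξ - (μ : EuclideanSpace ℝ (Fin d))‖ ≤ C := by
      have := hC hμI
      simpa [Metric.mem_closedBall] using this
    have h1 : ‖ξ‖⁻¹ * ‖ξ - (μ : EuclideanSpace ℝ (Fin d))‖ ≤ ‖ξ‖⁻¹ * C :=
      mul_le_mul_of_nonneg_left ht (le_of_lt (inv_pos.mpr hnorm))
    have h2 : ‖ξ‖⁻¹ ≤ δ / (C + 1) := by
      rw [inv_le_comm₀ hnorm (by positivity)]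
      rwa [inv_div]
    calc ‖ξ‖⁻¹ * ‖ξ - (μ : EuclideanSpace ℝ (Fin d))‖ ≤ ‖ξ‖⁻¹ * C := h1
      _ ≤ δ / (C + 1) * C := mul_le_mul_of_nonneg_right h2 hC0
      _ < δ := by
          rw [div_mul_eq_mul_div, div_lt_iff₀ (by positivity : (0:ℝ) < C + 1)]
          nlinarith
  have := hth hy
  have hμeq : (μ : EuclideanSpace ℝ (Fin d)) = ‖ξ‖ • (‖ξ‖⁻¹ • (μ : EuclideanSpace ℝ (Fin d))) := by
    rw [smul_smul, mul_inv_cancel₀ hnorm.ne', one_smul]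
  rw [hμeq]
  exact hΓ₁cone _ hnorm _ this
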